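/- Let m ≥ 1 be a natural number. On the region D = {(x, y₁, …, y_m) ∈ ℝ^{m+1} : x ≥ 0, yᵢ ≥ 0 for all i, and x + yᵢ ≤ 1 for all i}, the function F(x, y₁, …, y_m) = Σ_{i=1}^{m} [2Λ(πyᵢ) − 2Λ(π(x + yᵢ))] + m·Λ(πx) satisfies F ≤ 4m·Λ(π/4), with equality if and only if x = 1/2 and yᵢ = 1/4 for every i. -/

import Mathlib

open Real

/-- The Lobachevsky function `Λ(θ) = -∫₀^θ log|2 sin t| dt`. -/
noncomputable def Lob (θ : ℝ) : ℝ :=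
  -∫ t in (0:ℝ)..θ, Real.log |2 * Real.sin t|

open MeasureTheory intervalIntegral Set


noncomputable def LL : ℝ → ℝ := fun t => Real.log |2 * Real.sin t|

lemma intLog01 : IntervalIntegrable Real.log volume 0 1 := by
  have hr : IntervalIntegrable (fun x : ℝ => 2 * x ^ (-(1:ℝ)/2)) volume 0 1 :=
    (intervalIntegrable_rpow' (by norm_num)).const_mul 2
  refine hr.mono_fun' Real.measurable_log.aestronglyMeasurable ?_
  rw [uIoc_of_le (by norm_num : (0:ℝ) ≤ 1)]
  rw [Filter.EventuallyLE, ae_restrict_iff' measurableSet_Ioc]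
  filter_upwards with x hx
  have hx0 : 0 < x := hx.1
  have hx1 : x ≤ 1 := hx.2
  have hlog : Real.log x ≤ 0 := Real.log_nonpos hx0.le hx1
  have h1 : Real.log (x ^ (-(1:ℝ)/2)) ≤ x ^ (-(1:ℝ)/2) - 1 :=
    Real.log_le_sub_one_of_pos (Real.rpow_pos_of_pos hx0 _)
  rw [Real.log_rpow hx0] at h1
  have hp : (0:ℝ) < x ^ (-(1:ℝ)/2) := Real.rpow_pos_of_pos hx0 _
  rw [Real.norm_eq_abs, abs_of_nonpos hlog]
  nlinarith

lemma intLog0c {c : ℝ} (hc : 0 ≤ c) : IntervalIntegrable Real.log volume 0 c := by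
  rcases le_total c 1 with h | h
  · exact intLog01.mono_set (uIcc_subset_uIcc (by simp) (by rw [uIcc_of_le (by norm_num : (0:ℝ) ≤ 1)]; exact ⟨hc, h⟩))
  · exact intLog01.trans (intervalIntegrable_log (by rw [uIcc_of_le h]; rintro ⟨h0, -⟩; norm_num at h0))

lemma sin_lower {t : ℝ} (h0 : 0 < t) (h1 : t < π) : 2 * t * (π - t) / π^2 ≤ Real.sin t := by
  rcases le_total t (π/2) with h | h
  · have := Real.mul_le_sin h0.le h
    have hπ : 0 < π := Real.pi_pos
    have e : 2 * t * (π - t) / π^2 = 2/π*t - 2*t^2/π^2 := by field_simp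
    have e2 : (0:ℝ) ≤ 2*t^2/π^2 := by positivity
    linarith
  · have h2 : 0 ≤ π - t := by linarith
    have h3 : π - t ≤ π / 2 := by linarith
    have := Real.mul_le_sin h2 h3
    rw [← Real.sin_pi_sub]
    have e : 2 * t * (π - t) / π^2 = 2/π*(π-t) - 2*(π-t)^2/π^2 := by field_simp; ring
    have e2 : (0:ℝ) ≤ 2*(π-t)^2/π^2 := by positivity
    linarith

set_option maxHeartbeats 800000 in
lemma intLL : IntervalIntegrable LL volume 0 π := by
  have hπ : (0:ℝ) < π := Real.pi_pos
  have i1 : IntervalIntegrable (fun t : ℝ => Real.log t) volume 0 π := intLog0c hπ.le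
  have i2 : IntervalIntegrable (fun t : ℝ => Real.log (π - t)) volume 0 π := by
    have := (intLog0c hπ.le).comp_sub_left π
    simpa using this.symm
  have hg : IntervalIntegrable
      (fun t : ℝ => Real.log 2 + (Real.log (π^2/2) - Real.log t - Real.log (π - t)))
      volume 0 π := by
    exact intervalIntegrable_const.add ((intervalIntegrable_const.sub i1).sub i2)
  refine hg.mono_fun' ((Real.measurable_log.comp
    ((Real.measurable_sin.const_mul 2).abs)).aestronglyMeasurable) ?_
  rw [uIoc_of_le hπ.le]
  rw [Filter.EventuallyLE]
  refine ae_restrict_of_ae_eq_of_ae_restrict Ioo_ae_eq_Ioc ?_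
  rw [ae_restrict_iff' measurableSet_Ioo]
  filter_upwards with t ht
  obtain ⟨h0, h1⟩ := ht
  have hst : 0 < Real.sin t := Real.sin_pos_of_pos_of_lt_pi h0 h1
  have hs := sin_lower h0 h1
  have habs : LL t = Real.log (2 * Real.sin t) := by
    have : (0:ℝ) < 2 * Real.sin t := by linarith
    unfold LL; rw [abs_of_pos this]
  have hup : Real.log (2 * Real.sin t) ≤ Real.log 2 := by
    have := Real.sin_le_one t
    exact Real.log_le_log (by linarith) (by linarith)
  set A : ℝ := 2 * t * (π - t) / π^2 with hA
  have hπt : (0:ℝ) < π - t := by linarith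
  have hA0 : 0 < A := by rw [hA]; positivity
  have hlA : Real.log A ≤ Real.log (2 * Real.sin t) :=
    Real.log_le_log hA0 (by rw [hA]; nlinarith)
  have eA : Real.log A = Real.log 2 + Real.log t + Real.log (π - t) - Real.log (π^2) := by
    rw [hA, Real.log_div (by positivity) (by positivity), Real.log_mul (by positivity) hπt.ne',
      Real.log_mul (by norm_num) h0.ne']
  have e3 : Real.log (π^2/2) = Real.log (π^2) - Real.log 2 :=
    Real.log_div (by positivity) (by norm_num)
  have e4 : Real.log t + Real.log (π - t) ≤ Real.log (π^2/2) := by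
    rw [← Real.log_mul h0.ne' hπt.ne']
    exact Real.log_le_log (by positivity) (by nlinarith)
  have hl2 : (0:ℝ) ≤ Real.log 2 := Real.log_nonneg (by norm_num)
  rw [Real.norm_eq_abs, habs, abs_le]
  constructor
  · linarith [eA ▸ hlA]
  · linarith

lemma LL_reflect (x : ℝ) : LL (π - x) = LL x := by unfold LL; rw [Real.sin_pi_sub]

lemma intLcc {a b : ℝ} (ha0 : 0 ≤ a) (haπ : a ≤ π) (hb0 : 0 ≤ b) (hbπ : b ≤ π) :
    IntervalIntegrable LL volume a b := by
  apply intLL.mono_set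
  exact Set.uIcc_subset_uIcc (by rw [uIcc_of_le Real.pi_pos.le]; exact ⟨ha0, haπ⟩)
    (by rw [uIcc_of_le Real.pi_pos.le]; exact ⟨hb0, hbπ⟩)

lemma LL_half : ∫ t in (0:ℝ)..(π/2), LL t = 0 := by
  have hπ : (0:ℝ) < π := Real.pi_pos
  have iL2 : IntervalIntegrable LL volume 0 (π/2) := intLcc le_rfl hπ.le (by linarith) (by linarith)
  have iLhi : IntervalIntegrable LL volume (π/2) π := intLcc (by linarith) (by linarith) hπ.le le_rfl
  have fe : (fun x : ℝ => LL (π - x)) = LL := funext LL_reflect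
  have refl1 : ∫ t in (0:ℝ)..(π/2), LL t = ∫ t in (π/2)..π, LL t := by
    have h := intervalIntegral.integral_comp_sub_left (a := (0:ℝ)) (b := π/2) LL π
    rw [fe, show π - π/2 = π/2 by ring, sub_zero] at h
    exact h
  have split : ∫ t in (0:ℝ)..π, LL t = (∫ t in (0:ℝ)..(π/2), LL t) + ∫ t in (π/2)..π, LL t :=
    (intervalIntegral.integral_add_adjacent_intervals iL2 iLhi).symm
  have icomp : IntervalIntegrable (fun s : ℝ => LL (π/2 - s)) volume 0 (π/2) := by
    have := iL2.comp_sub_left (π/2)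
    simpa using this.symm
  have hdo : ∫ s in (0:ℝ)..(π/2), LL (2*s) = (2:ℝ)⁻¹ * ∫ t in (0:ℝ)..π, LL t := by
    have h := intervalIntegral.integral_comp_mul_left (a := (0:ℝ)) (b := π/2) LL (c := 2) two_ne_zero
    rw [show (2:ℝ) * (π/2) = π by ring, mul_zero] at h
    rw [h, smul_eq_mul]
  have hae : ∀ᵐ s : ℝ, s ∈ Set.uIoc (0:ℝ) (π/2) → LL (2*s) = LL s + LL (π/2 - s) := by
    have h1 : ∀ᵐ s : ℝ, s ≠ π/2 := by
      rw [ae_iff]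
      have : {x : ℝ | ¬x ≠ π / 2} = {π/2} := by ext x; simp
      rw [this, Real.volume_singleton]
    filter_upwards [h1] with s hs hmem
    rw [uIoc_of_le (by linarith)] at hmem
    have hs0 : 0 < s := hmem.1
    have hs2 : s < π/2 := lt_of_le_of_ne hmem.2 hs
    have hsin : 0 < Real.sin s := Real.sin_pos_of_pos_of_lt_pi hs0 (by linarith)
    have hcos : 0 < Real.cos s := Real.cos_pos_of_mem_Ioo ⟨by linarith, hs2⟩
    have e1 : 2 * Real.sin (2*s) = (2 * Real.sin s) * (2 * Real.cos s) := by
      rw [Real.sin_two_mul]; ring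
    unfold LL
    rw [e1, abs_mul, Real.log_mul (by positivity) (by positivity), Real.sin_pi_div_two_sub]
  have hsum : ∫ s in (0:ℝ)..(π/2), LL (2*s)
      = (∫ s in (0:ℝ)..(π/2), LL s) + ∫ s in (0:ℝ)..(π/2), LL (π/2 - s) := by
    rw [← intervalIntegral.integral_add iL2 icomp]
    exact intervalIntegral.integral_congr_ae hae
  have hrefl2 : ∫ s in (0:ℝ)..(π/2), LL (π/2 - s) = ∫ s in (0:ℝ)..(π/2), LL s := by
    have h := intervalIntegral.integral_comp_sub_left (a := (0:ℝ)) (b := π/2) LL (π/2)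
    rw [h]
    norm_num
  have hC : ∫ t in (0:ℝ)..π, LL t = 2 * ∫ t in (0:ℝ)..(π/2), LL t := by
    rw [split, ← refl1]; ring
  rw [hrefl2] at hsum
  rw [hC] at hdo
  linarith

lemma LL_pi : ∫ t in (0:ℝ)..π, LL t = 0 := by
  have hπ : (0:ℝ) < π := Real.pi_pos
  have iL2 : IntervalIntegrable LL volume 0 (π/2) := intLcc le_rfl hπ.le (by linarith) (by linarith)
  have iLhi : IntervalIntegrable LL volume (π/2) π := intLcc (by linarith) (by linarith) hπ.le le_rfl
  have fe : (fun x : ℝ => LL (π - x)) = LL := funext LL_reflect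
  have refl1 : ∫ t in (0:ℝ)..(π/2), LL t = ∫ t in (π/2)..π, LL t := by
    have h := intervalIntegral.integral_comp_sub_left (a := (0:ℝ)) (b := π/2) LL π
    rw [fe, show π - π/2 = π/2 by ring, sub_zero] at h
    exact h
  rw [← intervalIntegral.integral_add_adjacent_intervals iL2 iLhi, ← refl1, LL_half]
  norm_num

lemma lob_LL (θ : ℝ) : Lob θ = -∫ t in (0:ℝ)..θ, LL t := rfl

lemma lob_zero : Lob 0 = 0 := by rw [lob_LL, intervalIntegral.integral_same, neg_zero]

lemma lob_half : Lob (π/2) = 0 := by rw [lob_LL, LL_half, neg_zero]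

lemma lob_pi : Lob π = 0 := by rw [lob_LL, LL_pi, neg_zero]

lemma lob_sub {a b : ℝ} (ha : 0 ≤ a) (ha' : a ≤ π) (hb : 0 ≤ b) (hb' : b ≤ π) :
    Lob b = Lob a - ∫ t in a..b, LL t := by
  have h := intervalIntegral.integral_add_adjacent_intervals
    (intLcc le_rfl Real.pi_pos.le ha ha') (intLcc ha ha' hb hb')
  rw [lob_LL, lob_LL, ← h]
  ring

lemma lob_reflect {θ : ℝ} (h0 : 0 ≤ θ) (hπ : θ ≤ π) : Lob (π - θ) = -Lob θ := by
  have fe : (fun x : ℝ => LL (π - x)) = LL := funext LL_reflect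
  have h := intervalIntegral.integral_comp_sub_left (a := θ) (b := π) LL π
  rw [fe, sub_self] at h
  have h2 : ∫ t in θ..π, LL t = -∫ t in (0:ℝ)..θ, LL t := by
    have := intervalIntegral.integral_add_adjacent_intervals
      (intLcc le_rfl Real.pi_pos.le h0 hπ) (intLcc h0 hπ Real.pi_pos.le le_rfl)
    rw [LL_pi] at this
    linarith
  rw [lob_LL, lob_LL, ← h, h2]

lemma lob_double {θ : ℝ} (h0 : 0 ≤ θ) (h : θ ≤ π/2) : Lob (2*θ) = 2*Lob θ - 2*Lob (π/2 - θ) := by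
  have hπ : (0:ℝ) < π := Real.pi_pos
  have iθ : IntervalIntegrable LL volume 0 θ := intLcc le_rfl hπ.le h0 (by linarith)
  have icomp : IntervalIntegrable (fun s : ℝ => LL (π/2 - s)) volume 0 θ := by
    have := (intLcc (by linarith : (0:ℝ) ≤ π/2 - θ) (by linarith) (by linarith : (0:ℝ) ≤ π/2) (by linarith)).comp_sub_left (π/2)
    simpa using this.symm
  have hdo : ∫ s in (0:ℝ)..θ, LL (2*s) = (2:ℝ)⁻¹ * ∫ t in (0:ℝ)..(2*θ), LL t := by
    have hh := intervalIntegral.integral_comp_mul_left (a := (0:ℝ)) (b := θ) LL (c := 2) two_ne_zero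
    rw [mul_zero] at hh
    rw [hh, smul_eq_mul]
  have hae : ∀ᵐ s : ℝ, s ∈ Set.uIoc (0:ℝ) θ → LL (2*s) = LL s + LL (π/2 - s) := by
    have h1 : ∀ᵐ s : ℝ, s ≠ π/2 := by
      rw [ae_iff]
      have : {x : ℝ | ¬x ≠ π / 2} = {π/2} := by ext x; simp
      rw [this, Real.volume_singleton]
    filter_upwards [h1] with s hs hmem
    rw [uIoc_of_le h0] at hmem
    have hs0 : 0 < s := hmem.1
    have hs2 : s < π/2 := lt_of_le_of_ne (le_trans hmem.2 h) hs
    have hsin : 0 < Real.sin s := Real.sin_pos_of_pos_of_lt_pi hs0 (by linarith)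
    have hcos : 0 < Real.cos s := Real.cos_pos_of_mem_Ioo ⟨by linarith, hs2⟩
    have e1 : 2 * Real.sin (2*s) = (2 * Real.sin s) * (2 * Real.cos s) := by
      rw [Real.sin_two_mul]; ring
    unfold LL
    rw [e1, abs_mul, Real.log_mul (by positivity) (by positivity), Real.sin_pi_div_two_sub]
  have hsum : ∫ s in (0:ℝ)..θ, LL (2*s)
      = (∫ s in (0:ℝ)..θ, LL s) + ∫ s in (0:ℝ)..θ, LL (π/2 - s) := by
    rw [← intervalIntegral.integral_add iθ icomp]
    exact intervalIntegral.integral_congr_ae hae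
  have hrefl : ∫ s in (0:ℝ)..θ, LL (π/2 - s) = ∫ t in (π/2 - θ)..(π/2), LL t := by
    have hh := intervalIntegral.integral_comp_sub_left (a := (0:ℝ)) (b := θ) LL (π/2)
    rw [sub_zero] at hh
    exact hh
  have h2 : ∫ t in (π/2 - θ)..(π/2), LL t = Lob (π/2 - θ) := by
    have := intervalIntegral.integral_add_adjacent_intervals
      (intLcc le_rfl hπ.le (by linarith : (0:ℝ) ≤ π/2 - θ) (by linarith))
      (intLcc (by linarith : (0:ℝ) ≤ π/2 - θ) (by linarith) (by linarith : (0:ℝ) ≤ π/2) (by linarith))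
    rw [LL_half] at this
    rw [lob_LL]
    linarith
  have e2θ : Lob (2*θ) = -∫ t in (0:ℝ)..(2*θ), LL t := lob_LL _
  have eθ : Lob θ = -∫ t in (0:ℝ)..θ, LL t := lob_LL _
  rw [hrefl, h2] at hsum
  rw [hdo] at hsum
  linarith

lemma lob_mid {u v : ℝ} (hu : 0 ≤ u) (huv : u ≤ v) (hsum : u + v ≤ π) :
    Lob u + Lob v ≤ 2 * Lob ((u+v)/2) := by
  have hπ : (0:ℝ) < π := Real.pi_pos
  set m := (u+v)/2 with hm
  set d := (v-u)/2 with hd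
  have hd0 : 0 ≤ d := by rw [hd]; linarith
  have hdm : d ≤ m := by rw [hd, hm]; linarith
  have hm2 : m ≤ π/2 := by rw [hm]; linarith
  have hm0 : 0 ≤ m := by rw [hm]; linarith
  have hv : m + d = v := by rw [hm, hd]; ring
  have hu' : m - d = u := by rw [hm, hd]; ring
  have hvπ : v ≤ π := by linarith
  have huπ : u ≤ π := by linarith
  have hmπ : m ≤ π := by linarith
  have e1 : ∫ τ in (0:ℝ)..d, LL (m + τ) = ∫ x in m..v, LL x := by
    have hh := intervalIntegral.integral_comp_add_left (a := (0:ℝ)) (b := d) LL m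
    rw [add_zero, hv] at hh
    exact hh
  have e2 : ∫ τ in (0:ℝ)..d, LL (m - τ) = ∫ x in u..m, LL x := by
    have hh := intervalIntegral.integral_comp_sub_left (a := (0:ℝ)) (b := d) LL m
    rw [sub_zero, hu'] at hh
    exact hh
  have i_f : IntervalIntegrable (fun τ : ℝ => LL (m + τ)) volume 0 d := by
    have := (intLcc hm0 hmπ (le_trans hu huv) hvπ).comp_add_left m
    rw [sub_self, hm] at this
    have hvm : v - (u+v)/2 = d := by rw [hd]; ring
    rwa [hvm] at this
  have i_g : IntervalIntegrable (fun τ : ℝ => LL (m - τ)) volume 0 d := by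
    have := (intLcc hu huπ hm0 hmπ).comp_sub_left m
    rw [sub_self, hm] at this
    have hum : (u+v)/2 - u = d := by rw [hd]; ring
    rw [hum] at this
    exact this.symm
  have hle : (fun τ : ℝ => LL (m - τ)) ≤ᵐ[volume.restrict (Icc 0 d)] (fun τ : ℝ => LL (m + τ)) := by
    rw [← Measure.restrict_congr_set Ioo_ae_eq_Icc]
    rw [Filter.EventuallyLE, ae_restrict_iff' measurableSet_Ioo]
    filter_upwards with τ hτ
    obtain ⟨ht0, htd⟩ := hτ
    have h1 : 0 < m - τ := by linarith
    have hsin1 : 0 < Real.sin (m - τ) := Real.sin_pos_of_pos_of_lt_pi h1 (by linarith)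
    have hcosm : 0 ≤ Real.cos m := Real.cos_nonneg_of_mem_Icc ⟨by linarith, hm2⟩
    have hsinτ : 0 ≤ Real.sin τ := Real.sin_nonneg_of_nonneg_of_le_pi (by linarith) (by linarith)
    have hdiff : Real.sin (m - τ) ≤ Real.sin (m + τ) := by
      have e : Real.sin (m+τ) - Real.sin (m-τ) = 2 * Real.cos m * Real.sin τ := by
        rw [Real.sin_add, Real.sin_sub]; ring
      nlinarith
    have hpos2 : (0:ℝ) < 2 * Real.sin (m + τ) := by linarith
    show LL (m - τ) ≤ LL (m + τ)
    unfold LL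
    rw [abs_of_pos (by linarith), abs_of_pos hpos2]
    exact Real.log_le_log (by linarith) (by linarith)
  have H := intervalIntegral.integral_mono_ae_restrict hd0 i_g i_f hle
  rw [e1, e2] at H
  have l1 : Lob v = Lob m - ∫ t in m..v, LL t := lob_sub hm0 hmπ (le_trans hu huv) hvπ
  have l2 : Lob m = Lob u - ∫ t in u..m, LL t := lob_sub hu huπ hm0 hmπ
  linarith

lemma lob_mid_lt {u v : ℝ} (hu : 0 ≤ u) (huv : u < v) (hsum : u + v < π) :
    Lob u + Lob v < 2 * Lob ((u+v)/2) := by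
  have hπ : (0:ℝ) < π := Real.pi_pos
  set m := (u+v)/2 with hm
  set d := (v-u)/2 with hd
  have hd0 : 0 < d := by rw [hd]; linarith
  have hdm : d ≤ m := by rw [hd, hm]; linarith
  have hm2 : m < π/2 := by rw [hm]; linarith
  have hm0 : 0 < m := by rw [hm]; linarith
  have hv : m + d = v := by rw [hm, hd]; ring
  have hu' : m - d = u := by rw [hm, hd]; ring
  have hvπ : v ≤ π := by linarith
  have huπ : u ≤ π := by linarith
  have hmπ : m ≤ π := by linarith
  have e1 : ∫ τ in (0:ℝ)..d, LL (m + τ) = ∫ x in m..v, LL x := by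
    have hh := intervalIntegral.integral_comp_add_left (a := (0:ℝ)) (b := d) LL m
    rw [add_zero, hv] at hh
    exact hh
  have e2 : ∫ τ in (0:ℝ)..d, LL (m - τ) = ∫ x in u..m, LL x := by
    have hh := intervalIntegral.integral_comp_sub_left (a := (0:ℝ)) (b := d) LL m
    rw [sub_zero, hu'] at hh
    exact hh
  have i_f : IntervalIntegrable (fun τ : ℝ => LL (m + τ)) volume 0 d := by
    have := (intLcc hm0.le hmπ (le_trans hu huv.le) hvπ).comp_add_left m
    rw [sub_self, hm] at this
    have hvm : v - (u+v)/2 = d := by rw [hd]; ring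
    rwa [hvm] at this
  have i_g : IntervalIntegrable (fun τ : ℝ => LL (m - τ)) volume 0 d := by
    have := (intLcc hu huπ hm0.le hmπ).comp_sub_left m
    rw [sub_self, hm] at this
    have hum : (u+v)/2 - u = d := by rw [hd]; ring
    rw [hum] at this
    exact this.symm
  have hstrict : ∀ τ ∈ Ioo (0:ℝ) d, LL (m - τ) < LL (m + τ) := by
    intro τ hτ
    obtain ⟨ht0, htd⟩ := hτ
    have h1 : 0 < m - τ := by linarith
    have hsin1 : 0 < Real.sin (m - τ) := Real.sin_pos_of_pos_of_lt_pi h1 (by linarith)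
    have hcosm : 0 < Real.cos m := Real.cos_pos_of_mem_Ioo ⟨by linarith, hm2⟩
    have hsinτ : 0 < Real.sin τ := Real.sin_pos_of_pos_of_lt_pi ht0 (by linarith)
    have hdiff : Real.sin (m - τ) < Real.sin (m + τ) := by
      have e : Real.sin (m+τ) - Real.sin (m-τ) = 2 * Real.cos m * Real.sin τ := by
        rw [Real.sin_add, Real.sin_sub]; ring
      nlinarith
    unfold LL
    rw [abs_of_pos (by linarith), abs_of_pos (by linarith)]
    exact Real.log_lt_log (by linarith) (by linarith)
  have hle : (fun τ : ℝ => LL (m - τ)) ≤ᵐ[volume.restrict (Ioc 0 d)] (fun τ : ℝ => LL (m + τ)) := by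
    rw [← Measure.restrict_congr_set Ioo_ae_eq_Ioc]
    rw [Filter.EventuallyLE, ae_restrict_iff' measurableSet_Ioo]
    filter_upwards with τ hτ
    exact (hstrict τ hτ).le
  have hlt : volume.restrict (Ioc 0 d) {τ : ℝ | LL (m - τ) < LL (m + τ)} ≠ 0 := by
    have hsub : Ioo (0:ℝ) d ⊆ {τ : ℝ | LL (m - τ) < LL (m + τ)} := fun τ hτ => hstrict τ hτ
    have h1 : volume.restrict (Ioc 0 d) (Ioo (0:ℝ) d) ≤
        volume.restrict (Ioc 0 d) {τ : ℝ | LL (m - τ) < LL (m + τ)} := measure_mono hsub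
    have h2 : volume.restrict (Ioc 0 d) (Ioo (0:ℝ) d) = volume (Ioo (0:ℝ) d) := by
      rw [Measure.restrict_apply measurableSet_Ioo,
        Set.inter_eq_self_of_subset_left Set.Ioo_subset_Ioc_self]
    have h3 : (0:ENNReal) < volume (Ioo (0:ℝ) d) := by
      rw [Real.volume_Ioo]
      simp [hd0]
    exact ((h3.trans_le (h2 ▸ h1))).ne'
  have H := intervalIntegral.integral_lt_integral_of_ae_le_of_measure_setOf_lt_ne_zero
    hd0.le i_g i_f hle hlt
  rw [e1, e2] at H
  have l1 : Lob v = Lob m - ∫ t in m..v, LL t := lob_sub hm0.le hmπ (le_trans hu huv.le) hvπ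
  have l2 : Lob m = Lob u - ∫ t in u..m, LL t := lob_sub hu huπ hm0.le hmπ
  linarith

lemma lob_sum_le {a b : ℝ} (ha : 0 ≤ a) (hb : 0 ≤ b) (hab : a + b ≤ π) :
    Lob a + Lob b ≤ 2 * Lob ((a+b)/2) := by
  rcases le_total a b with h | h
  · exact lob_mid ha h hab
  · have := lob_mid hb h (by linarith)
    rw [show (b+a)/2 = (a+b)/2 by ring] at this
    linarith

lemma lob_sum_lt {a b : ℝ} (ha : 0 ≤ a) (hb : 0 ≤ b) (hne : a ≠ b) (hab : a + b < π) :
    Lob a + Lob b < 2 * Lob ((a+b)/2) := by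
  rcases lt_or_gt_of_ne hne with h | h
  · exact lob_mid_lt ha h hab
  · have := lob_mid_lt hb h (by linarith)
    rw [show (b+a)/2 = (a+b)/2 by ring] at this
    linarith

lemma key {a b : ℝ} (ha : 0 ≤ a) (hb : 0 ≤ b) (hab : a + b ≤ π) :
    2*Lob a + 2*Lob b - Lob (a+b) ≤ 4*Lob (π/4) ∧
    (2*Lob a + 2*Lob b - Lob (a+b) = 4*Lob (π/4) ↔ a = π/4 ∧ b = π/4) := by
  have hπ : (0:ℝ) < π := Real.pi_pos
  set s2 := (a+b)/2 with hs2
  set t2 := π/2 - s2 with ht2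
  have hs0 : 0 ≤ s2 := by rw [hs2]; linarith
  have hsπ : s2 ≤ π/2 := by rw [hs2]; linarith
  have ht0 : 0 ≤ t2 := by rw [ht2]; linarith
  have hst : s2 + t2 = π/2 := by rw [ht2]; ring
  have hdup : Lob (a+b) = 2*Lob s2 - 2*Lob t2 := by
    have h := lob_double (θ := s2) hs0 hsπ
    rw [show 2*s2 = a+b by rw [hs2]; ring] at h
    rw [h, ht2]
  have h1 : Lob a + Lob b ≤ 2*Lob s2 := lob_sum_le ha hb hab
  have h2 : 2*Lob s2 + 2*Lob t2 ≤ 4*Lob (π/4) := by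
    have h := lob_sum_le hs0 ht0 (by rw [hst]; linarith)
    rw [hst, show (π/2)/2 = π/4 by ring] at h
    linarith
  have h2' : s2 ≠ π/4 → 2*Lob s2 + 2*Lob t2 < 4*Lob (π/4) := by
    intro hne
    have hne2 : s2 ≠ t2 := by rw [ht2]; intro hc; apply hne; linarith [hc]
    have h := lob_sum_lt hs0 ht0 hne2 (by rw [hst]; linarith)
    rw [hst, show (π/2)/2 = π/4 by ring] at h
    linarith
  constructor
  · linarith
  constructor
  · intro heq
    have hsum : a + b = π/2 := by
      by_contra hc
      have : s2 ≠ π/4 := by rw [hs2]; intro h; apply hc; linarith [h]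
      have := h2' this
      linarith
    have habe : a = b := by
      by_contra hc
      have := lob_sum_lt ha hb hc (by rw [hsum]; linarith)
      rw [← hs2] at this
      linarith
    constructor <;> [skip; skip] <;> linarith
  · rintro ⟨rfl, rfl⟩
    rw [show π/4 + π/4 = π/2 by ring, lob_half]
    ring

lemma term_key {x z : ℝ} (hx : 0 ≤ x) (hz : 0 ≤ z) (hxz : x + z ≤ 1) :
    2*Lob (π*z) - 2*Lob (π*(x+z)) + Lob (π*x) ≤ 4*Lob (π/4) ∧
    (2*Lob (π*z) - 2*Lob (π*(x+z)) + Lob (π*x) = 4*Lob (π/4) ↔ x = 1/2 ∧ z = 1/4) := by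
  have hπ : (0:ℝ) < π := Real.pi_pos
  set a := π * z with hA
  set b := π - π*(x+z) with hB
  have ha : 0 ≤ a := by rw [hA]; nlinarith
  have hb : 0 ≤ b := by rw [hB]; nlinarith
  have hab : a + b ≤ π := by rw [hA, hB]; nlinarith
  have refl1 : Lob b = - Lob (π*(x+z)) := by
    rw [hB]
    exact lob_reflect (by nlinarith) (by nlinarith)
  have refl2 : Lob (a+b) = - Lob (π*x) := by
    rw [show a + b = π - π*x by rw [hA, hB]; ring]
    exact lob_reflect (by nlinarith) (by nlinarith)
  have hkey := key ha hb hab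
  have heq : 2*Lob (π*z) - 2*Lob (π*(x+z)) + Lob (π*x)
      = 2*Lob a + 2*Lob b - Lob (a+b) := by
    rw [refl1, refl2, hA]
    ring
  rw [heq]
  refine ⟨hkey.1, hkey.2.trans ?_⟩
  constructor
  · rintro ⟨h1, h2⟩
    rw [hA] at h1
    rw [hB] at h2
    constructor
    · nlinarith
    · nlinarith
  · rintro ⟨rfl, rfl⟩
    constructor
    · rw [hA]; ring
    · rw [hB]; ring

theorem stmt_15 (m : ℕ) (hm : 1 ≤ m) (x : ℝ) (y : Fin m → ℝ)
    (hx : 0 ≤ x) (hy : ∀ i, 0 ≤ y i) (hxy : ∀ i, x + y i ≤ 1) :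
    ((∑ i : Fin m, (2 * Lob (π * y i) - 2 * Lob (π * (x + y i)))) + m * Lob (π * x)
        ≤ 4 * m * Lob (π/4)) ∧
    ((∑ i : Fin m, (2 * Lob (π * y i) - 2 * Lob (π * (x + y i)))) + m * Lob (π * x)
        = 4 * m * Lob (π/4) ↔ x = 1/2 ∧ ∀ i, y i = 1/4) := by
  have hterm := fun i : Fin m => term_key hx (hy i) (hxy i)
  have hsum_eq : (∑ i : Fin m, (2 * Lob (π * y i) - 2 * Lob (π * (x + y i)))) + m * Lob (π * x)
      = ∑ i : Fin m, (2 * Lob (π * y i) - 2 * Lob (π * (x + y i)) + Lob (π * x)) := by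
    rw [Finset.sum_add_distrib, Finset.sum_const, Finset.card_univ, Fintype.card_fin,
      nsmul_eq_mul]
  have hconst : ∑ _i : Fin m, (4 * Lob (π/4)) = 4 * m * Lob (π/4) := by
    rw [Finset.sum_const, Finset.card_univ, Fintype.card_fin, nsmul_eq_mul]
    ring
  rw [hsum_eq]
  constructor
  · calc ∑ i : Fin m, (2 * Lob (π * y i) - 2 * Lob (π * (x + y i)) + Lob (π * x))
        ≤ ∑ _i : Fin m, (4 * Lob (π/4)) := Finset.sum_le_sum (fun i _ => (hterm i).1)
      _ = 4 * m * Lob (π/4) := hconst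
  · constructor
    · intro h
      rw [← hconst] at h
      have hall := (Finset.sum_eq_sum_iff_of_le (fun i _ => (hterm i).1)).1 h
      have i0 : Fin m := ⟨0, hm⟩
      refine ⟨((hterm i0).2.1 (hall i0 (Finset.mem_univ i0))).1, fun i => ?_⟩
      exact ((hterm i).2.1 (hall i (Finset.mem_univ i))).2
    · rintro ⟨hx2, hy2⟩
      rw [← hconst]
      exact Finset.sum_congr rfl (fun i _ => (hterm i).2.2 ⟨hx2, hy2 i⟩)
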